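/- Let n ≥ 1, m > 0 and 0 < θ ≤ 1. Then there exist δ₀ ∈ (0, δ) and a constant C > 0 depending only on n, δ₀ and θ such that for all t ≥ 1 and all P₁ ∈ ℝ, ∫_{|ξ| ≤ δ₀} P₁² e^{-|ξ|² t} R(|ξ|)² sin²(t√(|ξ|² + m² log(1+|ξ|^{2θ}))) dξ ≤ C m^{-2} P₁² t^{-(n+8−6θ)/2}, where R(r) := 1/b(r) − 1/√(r² + m² log(1 + r^{2θ})). -/

import Mathlib

open MeasureTheory Real

noncomputable section

/-- Euclidean space `ℝⁿ`. -/
abbrev E (n : ℕ) := EuclideanSpace ℝ (Fin n)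

/-- The Fourier transform `û₁(ξ) = ∫ e^{-i x·ξ} u₁(x) dx`. -/
def fourierT (n : ℕ) (u₁ : E n → ℝ) (ξ : E n) : ℂ :=
  ∫ x : E n, Complex.exp (-(Complex.I * ((inner ℝ x ξ : ℝ) : ℂ))) * (u₁ x : ℂ)

/-- `b(r) = (1/2)√(4r² + 4m² log(1+r^{2θ}) − r⁴)` (low frequencies). -/
def bF (m θ r : ℝ) : ℝ :=
  Real.sqrt (4 * r ^ 2 + 4 * m ^ 2 * Real.log (1 + r ^ (2 * θ)) - r ^ 4) / 2

/-- `d(r) = (1/2)√(r⁴ − 4r² − 4m² log(1+r^{2θ}))` (high frequencies). -/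
def dF (m θ r : ℝ) : ℝ :=
  Real.sqrt (r ^ 4 - 4 * r ^ 2 - 4 * m ^ 2 * Real.log (1 + r ^ (2 * θ))) / 2


/-- The remainder `R(r) = 1/b(r) − 1/√(r² + m² log(1+r^{2θ}))`. -/
def RF (m θ r : ℝ) : ℝ :=
  1 / bF m θ r - 1 / Real.sqrt (r ^ 2 + m ^ 2 * Real.log (1 + r ^ (2 * θ)))

lemma base_gauss (n : ℕ) : Integrable (fun x : E n => Real.exp (-(1/2 : ℝ) * ‖x‖ ^ 2)) := by
  have h := GaussianFourier.integrable_cexp_neg_mul_sq_norm_add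
    (V := E n) (b := (1/2 : ℂ)) (by norm_num) 0 0
  refine h.norm.congr ?_
  filter_upwards with v
  simp [Complex.norm_exp]
  norm_cast

lemma moment_bound {r p : ℝ} (hr : 0 ≤ r) (hp0 : 0 ≤ p) (hp8 : p ≤ 8) :
    Real.exp (-r ^ 2) * r ^ p ≤ 4097 * Real.exp (-(1/2 : ℝ) * r ^ 2) := by
  rcases le_total r 1 with h1 | h1
  · have h2 : r ^ p ≤ 1 := Real.rpow_le_one hr h1 hp0
    have h3 : Real.exp (-r ^ 2) ≤ Real.exp (-(1/2 : ℝ) * r ^ 2) := by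
      apply Real.exp_le_exp.mpr; nlinarith [sq_nonneg r]
    have h4 : (0:ℝ) < Real.exp (-(1/2 : ℝ) * r ^ 2) := Real.exp_pos _
    nlinarith [Real.exp_pos (-r ^ 2), Real.rpow_nonneg hr p]
  · have h2 : r ^ p ≤ r ^ (8:ℝ) := Real.rpow_le_rpow_of_exponent_le h1 hp8
    have h2' : r ^ (8:ℝ) = r ^ (8:ℕ) := Real.rpow_natCast r 8
    have h5 : r ^ 2 / 8 ≤ Real.exp (r ^ 2 / 8) := by
      linarith [Real.add_one_le_exp (r ^ 2 / 8)]
    have h6 : (r ^ 2 / 8) ^ (4:ℕ) ≤ Real.exp (r ^ 2 / 8) ^ (4:ℕ) :=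
      pow_le_pow_left₀ (by positivity) h5 4
    have h7 : Real.exp (r ^ 2 / 8) ^ (4:ℕ) = Real.exp (r ^ 2 / 2) := by
      rw [← Real.exp_nat_mul]; ring_nf
    have h8 : r ^ (8:ℕ) ≤ 4096 * Real.exp (r ^ 2 / 2) := by
      rw [← h7]; nlinarith [h6]
    have h9 : Real.exp (-r ^ 2) * Real.exp (r ^ 2 / 2) = Real.exp (-(1/2:ℝ) * r ^ 2) := by
      rw [← Real.exp_add]; ring_nf
    have he := Real.exp_pos (-r ^ 2)
    have he2 := Real.exp_pos (-(1/2:ℝ) * r ^ 2)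
    calc Real.exp (-r ^ 2) * r ^ p ≤ Real.exp (-r ^ 2) * (4096 * Real.exp (r ^ 2 / 2)) := by
          rw [h2'] at h2; nlinarith
      _ = 4096 * Real.exp (-(1/2:ℝ) * r ^ 2) := by rw [← h9]; ring
      _ ≤ 4097 * Real.exp (-(1/2:ℝ) * r ^ 2) := by nlinarith

lemma gauss_moment_int (n : ℕ) {p : ℝ} (hp0 : 0 ≤ p) (hp8 : p ≤ 8) :
    Integrable (fun x : E n => Real.exp (-‖x‖ ^ 2) * ‖x‖ ^ p) := by
  have hcont : Continuous (fun x : E n => Real.exp (-‖x‖ ^ 2) * ‖x‖ ^ p) := by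
    apply Continuous.mul
    · exact (continuous_norm.pow 2).neg.rexp
    · exact continuous_norm.rpow_const (fun x => Or.inr hp0)
  refine Integrable.mono' ((base_gauss n).const_mul 4097) hcont.aestronglyMeasurable ?_
  filter_upwards with x
  rw [Real.norm_eq_abs, abs_of_nonneg (by positivity)]
  exact moment_bound (norm_nonneg x) hp0 hp8

lemma gauss_scale (n : ℕ) {p t : ℝ} (hp0 : 0 ≤ p) (ht : 0 < t) :
    ∫ x : E n, Real.exp (-t * ‖x‖ ^ 2) * ‖x‖ ^ p
      = t ^ (-((n:ℝ) + p) / 2) * ∫ x : E n, Real.exp (-‖x‖ ^ 2) * ‖x‖ ^ p := by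
  set s : ℝ := Real.sqrt t with hs_def
  have hs : 0 < s := Real.sqrt_pos.mpr ht
  have hst : s ^ 2 = t := Real.sq_sqrt ht.le
  have key := MeasureTheory.Measure.integral_comp_inv_smul_of_nonneg (μ := volume)
    (fun x : E n => Real.exp (-t * ‖x‖ ^ 2) * ‖x‖ ^ p) hs.le
  have hn : Module.finrank ℝ (E n) = n := finrank_euclideanSpace_fin
  rw [hn] at key
  have lhs_eq : (∫ x : E n, Real.exp (-t * ‖s⁻¹ • x‖ ^ 2) * ‖s⁻¹ • x‖ ^ p)
      = s ^ (-p) * ∫ x : E n, Real.exp (-‖x‖ ^ 2) * ‖x‖ ^ p := by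
    rw [← MeasureTheory.integral_const_mul]
    congr 1 with x
    have hnorm : ‖s⁻¹ • x‖ = s⁻¹ * ‖x‖ := by
      rw [norm_smul, Real.norm_eq_abs, abs_of_pos (inv_pos.mpr hs)]
    rw [hnorm]
    have h1 : -t * (s⁻¹ * ‖x‖) ^ 2 = -‖x‖ ^ 2 := by
      field_simp
      nlinarith [hst]
    rw [h1, Real.mul_rpow (inv_pos.mpr hs).le (norm_nonneg x),
      Real.inv_rpow hs.le, ← Real.rpow_neg hs.le]
    ring
  rw [smul_eq_mul] at key
  beta_reduce at key
  rw [lhs_eq] at key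
  have hsn : (0:ℝ) < s ^ n := by positivity
  have : (∫ x : E n, Real.exp (-t * ‖x‖ ^ 2) * ‖x‖ ^ p)
      = (s ^ n)⁻¹ * (s ^ (-p) * ∫ x : E n, Real.exp (-‖x‖ ^ 2) * ‖x‖ ^ p) := by
    rw [eq_inv_mul_iff_mul_eq₀ hsn.ne', ← key]
  rw [this]
  have hpow : (s ^ n)⁻¹ * s ^ (-p) = t ^ (-((n:ℝ) + p) / 2) := by
    have h1 : s = t ^ ((1:ℝ)/2) := by rw [hs_def, Real.sqrt_eq_rpow]
    rw [← Real.rpow_natCast s n, h1, ← Real.rpow_mul ht.le, ← Real.rpow_mul ht.le,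
      ← Real.rpow_neg ht.le, ← Real.rpow_add ht]
    ring_nf
  rw [← hpow]; ring

set_option maxHeartbeats 1000000 in
lemma RF_sq_le (m θ : ℝ) (hm : 0 < m) (hθ1 : 0 < θ) (r : ℝ)
    (hr0 : 0 < r) (hr1 : r ≤ 1)
    (hpos : 0 < 4 * r ^ 2 + 4 * m ^ 2 * Real.log (1 + r ^ (2 * θ)) - r ^ 4) :
    RF m θ r ^ 2 ≤ r ^ ((8:ℝ) - 6 * θ) / (2 * m ^ 6) := by
  set x : ℝ := r ^ (2 * θ) with hx_def
  have hx0 : 0 < x := Real.rpow_pos_of_pos hr0 _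
  have hx1 : x ≤ 1 := Real.rpow_le_one hr0.le hr1 (by positivity)
  set L : ℝ := Real.log (1 + x) with hL_def
  have hx' : (0:ℝ) < 1 + x := by linarith
  have hlog : -L ≤ (1 + x)⁻¹ - 1 := by
    have h := Real.log_le_sub_one_of_pos (inv_pos.mpr hx')
    rwa [Real.log_inv] at h
  have hinv : (1 + x)⁻¹ ≤ 1 - x / 2 := by
    rw [inv_le_iff_one_le_mul₀ hx']
    nlinarith
  have hL : x / 2 ≤ L := by linarith
  have hL0 : 0 < L := by linarith
  set a : ℝ := r ^ 2 + m ^ 2 * L with ha_def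
  have ha : 0 < a := by positivity
  set sa : ℝ := Real.sqrt a with hsa_def
  have hsa0 : 0 < sa := Real.sqrt_pos.mpr ha
  have hsa2 : sa ^ 2 = a := Real.sq_sqrt ha.le
  set b : ℝ := bF m θ r with hb_def
  have hb0 : 0 < b := by
    rw [hb_def]; unfold bF
    rw [← hx_def, ← hL_def]
    positivity
  have hb2 : b ^ 2 = a - r ^ 4 / 4 := by
    rw [hb_def]; unfold bF
    rw [← hx_def, ← hL_def, div_pow, Real.sq_sqrt (by linarith [hpos])]
    rw [ha_def]; ring
  have hRF_eq : RF m θ r = 1 / b - 1 / sa := by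
    unfold RF
    rw [← hb_def, ← hx_def, ← hL_def, ← ha_def, ← hsa_def]
  clear_value x L a sa b
  rw [hRF_eq]
  have hrr : r ^ 2 ≤ 1 := by nlinarith
  have hr4 : r ^ 4 / 4 ≤ r ^ 2 := by
    nlinarith [mul_nonneg (sq_nonneg r) (sub_nonneg.mpr hrr)]
  have hb2ge : m ^ 2 * x / 2 ≤ b ^ 2 := by rw [hb2, ha_def]; nlinarith
  have hage : m ^ 2 * x / 2 ≤ a := by rw [ha_def]; nlinarith
  have hble : b ≤ sa := by
    have h := Real.sqrt_le_sqrt (show b ^ 2 ≤ sa ^ 2 by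
      rw [hb2, hsa2]; nlinarith [pow_nonneg hr0.le 4])
    rwa [Real.sqrt_sq hb0.le, Real.sqrt_sq hsa0.le] at h
  have hRF0 : 0 ≤ 1 / b - 1 / sa := by
    have := one_div_le_one_div_of_le hb0 hble
    linarith
  have hkey : (sa - b) * (sa + b) = r ^ 4 / 4 := by
    linear_combination hsa2 - hb2
  have hsb : 0 < sa + b := by linarith
  have hdiff : sa - b ≤ r ^ 4 / (4 * sa) := by
    have h1 : sa - b = (r ^ 4 / 4) / (sa + b) := by
      rw [eq_div_iff hsb.ne']; exact hkey
    have h2 : (r ^ 4 / 4) / (sa + b) ≤ (r ^ 4 / 4) / sa :=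
      div_le_div_of_nonneg_left (by positivity) hsa0 (by linarith)
    rw [h1, ← div_div] at *
    linarith [h2]
  have hRF_le : 1 / b - 1 / sa ≤ r ^ 4 / (4 * a * b) := by
    rw [div_sub_div _ _ hb0.ne' hsa0.ne', one_mul, mul_one]
    have h1 : (sa - b) / (b * sa) ≤ (r ^ 4 / (4 * sa)) / (b * sa) :=
      (div_le_div_iff_of_pos_right (by positivity)).mpr hdiff
    have h2 : (r ^ 4 / (4 * sa)) / (b * sa) = r ^ 4 / (4 * a * b) := by
      rw [div_div]
      congr 1
      linear_combination 4 * b * hsa2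
    linarith [h1, h2.symm.le]
  have hRF2 : (1 / b - 1 / sa) ^ 2 ≤ (r ^ 4 / (4 * a * b)) ^ 2 :=
    pow_le_pow_left₀ hRF0 hRF_le 2
  have hexp : r ^ ((8:ℝ) - 6 * θ) = r ^ (8:ℕ) / x ^ (3:ℕ) := by
    rw [hx_def, ← Real.rpow_natCast r 8, ← Real.rpow_natCast (r ^ (2*θ)) 3,
      ← Real.rpow_mul hr0.le, ← Real.rpow_sub hr0]
    norm_num
    congr 1
    ring
  have hc : (0:ℝ) < m ^ 2 * x / 2 := by positivity
  have ha2 : (m ^ 2 * x / 2) ^ 2 ≤ a ^ 2 := by nlinarith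
  have h3 : (m ^ 2 * x / 2) ^ 2 * (m ^ 2 * x / 2) ≤ a ^ 2 * b ^ 2 :=
    mul_le_mul ha2 hb2ge hc.le (by positivity)
  have e1 : (r ^ 4 / (4 * a * b)) ^ 2 = r ^ (8:ℕ) / (16 * (a ^ 2 * b ^ 2)) := by
    rw [div_pow]; congr 1 <;> ring
  have e2 : r ^ (8:ℕ) / (16 * (a ^ 2 * b ^ 2)) ≤ r ^ (8:ℕ) / (2 * m ^ 6 * x ^ 3) :=
    div_le_div_of_nonneg_left (by positivity) (by positivity) (by nlinarith [h3])
  have e3 : r ^ (8:ℕ) / (2 * m ^ 6 * x ^ 3) = r ^ ((8:ℝ) - 6 * θ) / (2 * m ^ 6) := by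
    rw [hexp]
    field_simp
  calc (1 / b - 1 / sa) ^ 2 ≤ (r ^ 4 / (4 * a * b)) ^ 2 := hRF2
    _ = r ^ (8:ℕ) / (16 * (a ^ 2 * b ^ 2)) := e1
    _ ≤ r ^ (8:ℕ) / (2 * m ^ 6 * x ^ 3) := e2
    _ = r ^ ((8:ℝ) - 6 * θ) / (2 * m ^ 6) := e3

/-- the `F₁`-estimate on the low frequency zone. -/
theorem stmt7 (n : ℕ) (hn : 1 ≤ n) (m θ : ℝ) (hm : 0 < m) (hθ1 : 0 < θ) (hθ2 : θ ≤ 1)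
    (δ : ℝ) (hδ2 : 2 < δ)
    (hδneg : ∀ r : ℝ, 0 < r → r < δ →
      r ^ 4 - 4 * r ^ 2 - 4 * m ^ 2 * Real.log (1 + r ^ (2 * θ)) < 0)
    (hδpos : ∀ r : ℝ, δ ≤ r →
      0 ≤ r ^ 4 - 4 * r ^ 2 - 4 * m ^ 2 * Real.log (1 + r ^ (2 * θ))) :
    ∃ δ₀ : ℝ, 0 < δ₀ ∧ δ₀ < δ ∧ ∃ C : ℝ, 0 < C ∧
      ∀ t : ℝ, 1 ≤ t → ∀ P₁ : ℝ,
        (∫ ξ in {ξ : E n | ‖ξ‖ ≤ δ₀},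
            P₁ ^ 2 * Real.exp (-(‖ξ‖ ^ 2) * t) * RF m θ ‖ξ‖ ^ 2 *
              Real.sin (t * Real.sqrt (‖ξ‖ ^ 2 + m ^ 2 * Real.log (1 + ‖ξ‖ ^ (2 * θ)))) ^ 2) ≤
          C * m⁻¹ ^ 2 * P₁ ^ 2 * t ^ (-((n : ℝ) + 8 - 6 * θ) / 2) := by
  set p : ℝ := 8 - 6 * θ with hp_def
  have hp0 : 0 ≤ p := by rw [hp_def]; linarith
  have hp8 : p ≤ 8 := by rw [hp_def]; linarith
  have hInt : Integrable (fun x : E n => Real.exp (-‖x‖ ^ 2) * ‖x‖ ^ p) :=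
    gauss_moment_int n hp0 hp8
  set I : ℝ := ∫ x : E n, Real.exp (-‖x‖ ^ 2) * ‖x‖ ^ p with hI_def
  have hI0 : 0 ≤ I := by
    rw [hI_def]
    apply integral_nonneg
    intro x
    positivity
  refine ⟨1, one_pos, by linarith, (I + 1) / m ^ 4, by positivity, ?_⟩
  intro t ht P₁
  have ht0 : 0 < t := by linarith
  set S : Set (E n) := {ξ : E n | ‖ξ‖ ≤ 1} with hS_def
  have hSmeas : MeasurableSet S := (isClosed_le continuous_norm continuous_const).measurableSet
  set g : E n → ℝ := fun ξ => P₁ ^ 2 / (2 * m ^ 6) * (Real.exp (-t * ‖ξ‖ ^ 2) * ‖ξ‖ ^ p)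
    with hg_def
  have hg_int : Integrable g := by
    apply Integrable.const_mul
    refine hInt.mono' ?_ ?_
    · exact ((continuous_const.mul (continuous_norm.pow 2)).rexp.mul
        (continuous_norm.rpow_const (fun x => Or.inr hp0))).aestronglyMeasurable
    · filter_upwards with x
      rw [Real.norm_eq_abs, abs_of_nonneg (by positivity)]
      have h1 : Real.exp (-t * ‖x‖ ^ 2) ≤ Real.exp (-‖x‖ ^ 2) := by
        apply Real.exp_le_exp.mpr
        nlinarith [sq_nonneg ‖x‖]
      have h2 : (0:ℝ) ≤ ‖x‖ ^ p := Real.rpow_nonneg (norm_nonneg x) p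
      nlinarith
  have step1 : (∫ ξ in S,
        P₁ ^ 2 * Real.exp (-(‖ξ‖ ^ 2) * t) * RF m θ ‖ξ‖ ^ 2 *
          Real.sin (t * Real.sqrt (‖ξ‖ ^ 2 + m ^ 2 * Real.log (1 + ‖ξ‖ ^ (2 * θ)))) ^ 2)
      ≤ ∫ ξ in S, g ξ := by
    apply integral_mono_of_nonneg
    · filter_upwards with ξ; positivity
    · exact hg_int.integrableOn
    · refine (ae_restrict_iff' hSmeas).mpr ?_
      filter_upwards with ξ hξ
      have hr1 : ‖ξ‖ ≤ 1 := hξ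
      have hexp_eq : Real.exp (-(‖ξ‖ ^ 2) * t) = Real.exp (-t * ‖ξ‖ ^ 2) := by ring_nf
      have hsin : Real.sin (t * Real.sqrt (‖ξ‖ ^ 2 + m ^ 2 *
          Real.log (1 + ‖ξ‖ ^ (2 * θ)))) ^ 2 ≤ 1 := sin_sq_le_one _
      have hsin0 : 0 ≤ Real.sin (t * Real.sqrt (‖ξ‖ ^ 2 + m ^ 2 *
          Real.log (1 + ‖ξ‖ ^ (2 * θ)))) ^ 2 := sq_nonneg _
      have hRF2 : RF m θ ‖ξ‖ ^ 2 ≤ ‖ξ‖ ^ ((8:ℝ) - 6 * θ) / (2 * m ^ 6) := by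
        rcases eq_or_lt_of_le (norm_nonneg ξ) with h0 | h0
        · have hRF0 : RF m θ ‖ξ‖ = 0 := by
            rw [← h0]
            simp [RF, bF, Real.zero_rpow (by positivity : (0:ℝ) < 2 * θ).ne']
          rw [hRF0, ← h0]
          rw [Real.zero_rpow (by linarith : (0:ℝ) < 8 - 6 * θ).ne']
          norm_num
        · have hpos : 0 < 4 * ‖ξ‖ ^ 2 + 4 * m ^ 2 *
              Real.log (1 + ‖ξ‖ ^ (2 * θ)) - ‖ξ‖ ^ 4 := by
            have := hδneg ‖ξ‖ h0 (by linarith)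
            linarith
          exact RF_sq_le m θ hm hθ1 ‖ξ‖ h0 hr1 hpos
      have hRFnn : 0 ≤ RF m θ ‖ξ‖ ^ 2 := sq_nonneg _
      have hexp_pos : (0:ℝ) < Real.exp (-t * ‖ξ‖ ^ 2) := Real.exp_pos _
      rw [hg_def]
      simp only
      rw [hexp_eq]
      calc P₁ ^ 2 * Real.exp (-t * ‖ξ‖ ^ 2) * RF m θ ‖ξ‖ ^ 2 *
            Real.sin (t * Real.sqrt (‖ξ‖ ^ 2 + m ^ 2 * Real.log (1 + ‖ξ‖ ^ (2 * θ)))) ^ 2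
          ≤ P₁ ^ 2 * Real.exp (-t * ‖ξ‖ ^ 2) * RF m θ ‖ξ‖ ^ 2 * 1 := by
            apply mul_le_mul_of_nonneg_left hsin (by positivity)
        _ = P₁ ^ 2 * Real.exp (-t * ‖ξ‖ ^ 2) * RF m θ ‖ξ‖ ^ 2 := mul_one _
        _ ≤ P₁ ^ 2 * Real.exp (-t * ‖ξ‖ ^ 2) * (‖ξ‖ ^ ((8:ℝ) - 6 * θ) / (2 * m ^ 6)) := by
            apply mul_le_mul_of_nonneg_left hRF2 (by positivity)
        _ = P₁ ^ 2 / (2 * m ^ 6) * (Real.exp (-t * ‖ξ‖ ^ 2) * ‖ξ‖ ^ p) := by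
            rw [hp_def]; ring
  have step2 : (∫ ξ in S, g ξ) ≤ ∫ ξ : E n, g ξ := by
    apply setIntegral_le_integral hg_int
    filter_upwards with ξ
    rw [hg_def]
    simp only
    positivity
  have step3 : (∫ ξ : E n, g ξ) = P₁ ^ 2 / (2 * m ^ 6) * (t ^ (-((n:ℝ) + p) / 2) * I) := by
    rw [hg_def]
    rw [MeasureTheory.integral_const_mul, gauss_scale n hp0 ht0, ← hI_def]
  have hT : (0:ℝ) < t ^ (-((n:ℝ) + p) / 2) := Real.rpow_pos_of_pos ht0 _
  have hexp2 : (-((n:ℝ) + p) / 2) = (-((n : ℝ) + 8 - 6 * θ) / 2) := by rw [hp_def]; ring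
  have step4 : P₁ ^ 2 / (2 * m ^ 6) * (t ^ (-((n:ℝ) + p) / 2) * I)
      ≤ (I + 1) / m ^ 4 * m⁻¹ ^ 2 * P₁ ^ 2 * t ^ (-((n:ℝ) + p) / 2) := by
    have h : (I + 1) / m ^ 4 * m⁻¹ ^ 2 = (I + 1) / m ^ 6 := by
      rw [inv_pow, ← one_div, div_mul_div_comm, mul_one, ← pow_add]
    rw [h, div_mul_eq_mul_div, div_mul_eq_mul_div, div_mul_eq_mul_div,
      div_le_div_iff₀ (by positivity) (by positivity)]
    have h0 : (0:ℝ) ≤ P₁ ^ 2 * t ^ (-((n:ℝ) + p) / 2) * m ^ 6 := by positivity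
    nlinarith [mul_nonneg h0 hI0, h0]
  calc (∫ ξ in S,
        P₁ ^ 2 * Real.exp (-(‖ξ‖ ^ 2) * t) * RF m θ ‖ξ‖ ^ 2 *
          Real.sin (t * Real.sqrt (‖ξ‖ ^ 2 + m ^ 2 * Real.log (1 + ‖ξ‖ ^ (2 * θ)))) ^ 2)
      ≤ ∫ ξ in S, g ξ := step1
    _ ≤ ∫ ξ : E n, g ξ := step2
    _ = P₁ ^ 2 / (2 * m ^ 6) * (t ^ (-((n:ℝ) + p) / 2) * I) := step3
    _ ≤ (I + 1) / m ^ 4 * m⁻¹ ^ 2 * P₁ ^ 2 * t ^ (-((n:ℝ) + p) / 2) := step4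
    _ = (I + 1) / m ^ 4 * m⁻¹ ^ 2 * P₁ ^ 2 * t ^ (-((n : ℝ) + 8 - 6 * θ) / 2) := by
        rw [hexp2]

end
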